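/- If P is an augmenting path with respect to a matching M in a graph G, then the symmetric difference M ⊕ P is a matching in G of size |M| + 1. -/

import Mathlib

variable {V : Type*} [DecidableEq V]

/-- `M` is a matching in the graph with edge set `E`: a set of edges of `E`
such that no two distinct edges share a vertex. -/
def IsMatching (E M : Finset (Sym2 V)) : Prop :=
  M ⊆ E ∧ ∀ e ∈ M, ∀ f ∈ M, e ≠ f → ∀ v, v ∈ e → v ∉ f

/-- The list of edges of the path given by the vertex list `l`. -/
def pathEdges (l : List V) : List (Sym2 V) :=
  (l.zip l.tail).map fun p => s(p.1, p.2)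

/-- `l` is (the vertex list of) an augmenting path with respect to the matching `M` in the
graph with edge set `E`: a path (distinct vertices, consecutive pairs forming edges of `E`)
with an odd number of edges, alternating between edges outside `M` (the even-indexed, in
particular the first and last) and edges of `M` (the odd-indexed), whose two endpoints are
unmatched by `M`. -/
def IsAugPath (E M : Finset (Sym2 V)) (l : List V) : Prop :=
  2 ≤ l.length ∧ l.Nodup ∧
    (∀ e ∈ pathEdges l, e ∈ E) ∧
    (pathEdges l).length % 2 = 1 ∧
    (∀ i (h : i < (pathEdges l).length), ((pathEdges l)[i] ∈ M ↔ i % 2 = 1)) ∧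
    (∀ e ∈ M, (∀ a, l.head? = some a → a ∉ e) ∧ (∀ a, l.getLast? = some a → a ∉ e))

/-- Auxiliary counting lemma: if the elements of `L` satisfy `p` exactly at odd indices,
then the number of elements satisfying `p` is `L.length / 2`. -/
lemma filter_alt_length {α : Type*} (p : α → Prop) [DecidablePred p] :
    ∀ (L : List α), (∀ i (h : i < L.length), p L[i] ↔ i % 2 = 1) →
      (L.filter (fun x => p x)).length = L.length / 2
  | [], _ => by simp
  | [a], h => by
    have ha : ¬ p a := by
      intro hpa
      have := (h 0 (by simp)).mp (by simpa using hpa)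
      omega
    simp [List.filter, ha]
  | a :: b :: t, h => by
    have ha : ¬ p a := by
      intro hpa
      have := (h 0 (by simp)).mp (by simpa using hpa)
      omega
    have hb : p b := by
      have := (h 1 (by simp)).mpr rfl
      simpa using this
    have ht : ∀ i (hi : i < t.length), p t[i] ↔ i % 2 = 1 := by
      intro i hi
      have := h (i + 2) (by simp; omega)
      simpa [Nat.add_mod] using this
    have := filter_alt_length p t ht
    simp only [List.filter_cons, decide_eq_true_eq, if_neg ha, if_pos hb,
      List.length_cons, this]
    omega

/-- If `P` is an augmenting path with respect to a matching `M`, then the symmetric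
difference `M ⊕ P` is a matching of size `|M| + 1`. -/
theorem augment_along_path (E M : Finset (Sym2 V)) (hsimple : ∀ e ∈ E, ¬ e.IsDiag)
    (hM : IsMatching E M) (l : List V) (hl : IsAugPath E M l) :
    IsMatching E (symmDiff M (pathEdges l).toFinset) ∧
      (symmDiff M (pathEdges l).toFinset).card = M.card + 1 := by
  obtain ⟨hlen, hnd, hEdges, hoddlen, halt, hends⟩ := hl
  obtain ⟨hME, hMm⟩ := hM
  have hn : (pathEdges l).length = l.length - 1 := by
    simp [pathEdges]
  have hgetE : ∀ i (h : i < (pathEdges l).length), (pathEdges l)[i] = s(l[i]'(by omega), l[i+1]'(by omega)) := by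
    intro i h
    simp only [pathEdges, List.getElem_map, List.getElem_zip, List.getElem_tail]
  have hmemE : ∀ i (h : i < (pathEdges l).length) v,
      v ∈ (pathEdges l)[i] ↔ v = l[i]'(by omega) ∨ v = l[i+1]'(by omega) := by
    intro i h v
    rw [hgetE i h, Sym2.mem_iff]
  have hinj : ∀ i j (hi : i < l.length) (hj : j < l.length), l[i] = l[j] → i = j := by
    intro i j hi hj hij
    exact (hnd.getElem_inj_iff (hi := hi) (hj := hj)).mp hij
  -- path edges are pairwise distinct
  have hpnd : (pathEdges l).Nodup := by
    rw [List.nodup_iff_injective_getElem]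
    rintro ⟨i, hi⟩ ⟨j, hj⟩ hij
    simp only at hij
    rw [hgetE i hi, hgetE j hj, Sym2.eq_iff] at hij
    rcases hij with ⟨h1, h2⟩ | ⟨h1, h2⟩
    · exact Fin.ext (hinj i j (by omega) (by omega) h1)
    · have e1 := hinj i (j+1) (by omega) (by omega) h1
      have e2 := hinj (i+1) j (by omega) (by omega) h2
      exact Fin.ext (by omega)
  -- membership in the edge finset
  have hmemP : ∀ e, e ∈ (pathEdges l).toFinset ↔
      ∃ i, ∃ h : i < (pathEdges l).length, e = (pathEdges l)[i] := by
    intro e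
    rw [List.mem_toFinset, List.mem_iff_getElem]
    constructor
    · rintro ⟨i, h, rfl⟩; exact ⟨i, h, rfl⟩
    · rintro ⟨i, h, rfl⟩; exact ⟨i, h, rfl⟩
  have hnz : 1 ≤ (pathEdges l).length := by omega
  -- key claim: an edge of `M` not on the path avoids all vertices of the path
  have key : ∀ e ∈ M, e ∉ (pathEdges l).toFinset →
      ∀ i (hi : i < l.length), l[i] ∉ e := by
    intro e heM heP i hi hie
    have hmatch : ∀ j (hj : j < (pathEdges l).length), j % 2 = 1 →
        l[i] ∈ (pathEdges l)[j] → False := by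
      intro j hj hjodd hmem
      have hjM : (pathEdges l)[j] ∈ M := (halt j hj).mpr hjodd
      by_cases hef : e = (pathEdges l)[j]
      · exact heP (hef ▸ (hmemP e).mpr ⟨j, hj, hef⟩)
      · exact hMm e heM _ hjM hef _ hie hmem
    rcases Nat.even_or_odd i with hev | hod
    · -- i even
      rcases Nat.eq_zero_or_pos i with rfl | hpos
      · -- head vertex
        have hhead : l.head? = some (l[0]'(by omega)) := by
          cases l with
          | nil => simp at hlen
          | cons a t => simp
        exact (hends e heM).1 _ hhead hie
      · -- edge i - 1 is odd-indexed
        have hev0 : i % 2 = 0 := Nat.even_iff.mp hev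
        have hi1 : i - 1 < (pathEdges l).length := by omega
        apply hmatch (i - 1) hi1 (by omega)
        rw [hmemE (i - 1) hi1]
        right
        congr 1
        omega
    · -- i odd
      by_cases hlast : i = l.length - 1
      · -- last vertex
        have hlq : l.getLast? = some (l[l.length - 1]'(by omega)) := by
          have hne : l ≠ [] := by
            intro h; rw [h] at hlen; simp at hlen
          rw [List.getLast?_eq_getLast hne, List.getLast_eq_getElem]
        subst hlast
        exact (hends e heM).2 _ hlq hie
      · -- edge i is odd-indexed
        have hii : i < (pathEdges l).length := by omega
        apply hmatch i hii (Nat.odd_iff.mp hod)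
        rw [hmemE i hii]
        left; rfl
  constructor
  · -- matching property
    constructor
    · intro e he
      rw [Finset.mem_symmDiff] at he
      rcases he with ⟨heM, _⟩ | ⟨heP, _⟩
      · exact hME heM
      · exact hEdges e (List.mem_toFinset.mp heP)
    · -- pairwise disjoint; prove the symmetric version first
      suffices hsym : ∀ e ∈ symmDiff M (pathEdges l).toFinset,
          ∀ f ∈ symmDiff M (pathEdges l).toFinset, e ≠ f →
          ∀ v, v ∈ e → v ∈ f → False by
        intro e he f hf hef v hv hvf
        exact hsym e he f hf hef v hv hvf
      have main : ∀ e, (e ∈ M ∧ e ∉ (pathEdges l).toFinset) →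
          ∀ f, (f ∈ (pathEdges l).toFinset ∧ f ∉ M) → ∀ v, v ∈ e → v ∈ f → False := by
        rintro e ⟨heM, heP⟩ f ⟨hfP, hfM⟩ v hv hvf
        obtain ⟨i, hi, rfl⟩ := (hmemP f).mp hfP
        rw [hmemE i hi] at hvf
        rcases hvf with rfl | rfl
        · exact key e heM heP i (by omega) hv
        · exact key e heM heP (i+1) (by omega) hv
      intro e he f hf hef v hv hvf
      rw [Finset.mem_symmDiff] at he hf
      rcases he with ⟨heM, heP⟩ | ⟨heP, heM⟩ <;> rcases hf with ⟨hfM, hfP⟩ | ⟨hfP, hfM⟩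
      · exact hMm e heM f hfM hef v hv hvf
      · exact main e ⟨heM, heP⟩ f ⟨hfP, hfM⟩ v hv hvf
      · exact main f ⟨hfM, hfP⟩ e ⟨heP, heM⟩ v hvf hv
      · -- both on the path, both at even indices
        obtain ⟨i, hi, rfl⟩ := (hmemP e).mp heP
        obtain ⟨j, hj, rfl⟩ := (hmemP f).mp hfP
        have hie : i % 2 = 0 := by
          have h := halt i hi
          by_contra hc
          exact heM (h.mpr (by omega))
        have hjf : j % 2 = 0 := by
          have h := halt j hj
          by_contra hc
          exact hfM (h.mpr (by omega))
        have hij : i ≠ j := by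
          intro h
          subst h
          exact hef rfl
        rw [hmemE i hi] at hv
        rw [hmemE j hj] at hvf
        rcases hv with rfl | rfl <;> rcases hvf with h | h
        · exact hij (hinj i j (by omega) (by omega) h)
        · have := hinj i (j+1) (by omega) (by omega) h
          omega
        · have := hinj (i+1) j (by omega) (by omega) h
          omega
        · have := hinj (i+1) (j+1) (by omega) (by omega) h
          omega
  · -- cardinality
    have hPcard : (pathEdges l).toFinset.card = (pathEdges l).length :=
      List.toFinset_card_of_nodup hpnd
    have hinterEq : M ∩ (pathEdges l).toFinset
        = ((pathEdges l).filter (fun x => x ∈ M)).toFinset := by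
      ext e
      simp only [Finset.mem_inter, List.mem_toFinset, List.mem_filter, decide_eq_true_eq]
      tauto
    have hfil : ((pathEdges l).filter (fun x => x ∈ M)).length = (pathEdges l).length / 2 :=
      filter_alt_length (fun x => x ∈ M) (pathEdges l) halt
    have hinterCard : (M ∩ (pathEdges l).toFinset).card = (pathEdges l).length / 2 := by
      rw [hinterEq, List.toFinset_card_of_nodup (hpnd.filter _), hfil]
    have hsd : symmDiff M (pathEdges l).toFinset
        = (M \ (pathEdges l).toFinset) ∪ ((pathEdges l).toFinset \ M) := rfl
    rw [hsd, Finset.card_union_of_disjoint disjoint_sdiff_sdiff]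
    have h1 := Finset.card_sdiff_add_card_inter M (pathEdges l).toFinset
    have h2 := Finset.card_sdiff_add_card_inter (pathEdges l).toFinset M
    rw [Finset.inter_comm] at h2
    omega
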